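/- Critical-pair criterion for confluence of multiset rewriting: let R be a set of multiset rules such that the rewrite relation → is terminating, and such that for every pair of rules (l₁,r₁), (l₂,r₂) and every nonempty multiset O with O ≤ l₁ and O ≤ l₂, the critical peak r₁ + (l₂ - O) ↞ l₁ + (l₂ - O) ↠ (l₁ - O) + r₂ is joinable (both sides reduce by ↠ to a common multiset). Then → is confluent. -/

import Mathlib

/-- One-step multiset rewriting generated by a set of rules `R`. -/
def MRStep {A : Type*} (R : Set (Multiset A × Multiset A)) :
    Multiset A → Multiset A → Prop :=
  fun M N => ∃ lr ∈ R, ∃ K, M = lr.1 + K ∧ N = lr.2 + K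

lemma MRStep.add_right {A : Type*} {R : Set (Multiset A × Multiset A)}
    {M N : Multiset A} (h : MRStep R M N) (C : Multiset A) :
    MRStep R (M + C) (N + C) := by
  obtain ⟨lr, hlr, K, hM, hN⟩ := h
  exact ⟨lr, hlr, K + C, by rw [hM, add_assoc], by rw [hN, add_assoc]⟩

lemma MRSteps.add_right {A : Type*} {R : Set (Multiset A × Multiset A)}
    {M N : Multiset A} (h : Relation.ReflTransGen (MRStep R) M N) (C : Multiset A) :
    Relation.ReflTransGen (MRStep R) (M + C) (N + C) := by
  induction h with
  | refl => exact .refl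
  | tail _ h ih => exact ih.tail (h.add_right C)

/-- Critical-pair criterion: if multiset rewriting is terminating and all
critical peaks are joinable, then it is confluent. -/
theorem multiset_critical_pair_confluence {A : Type*} [DecidableEq A]
    (R : Set (Multiset A × Multiset A))
    (hterm : ¬ ∃ f : ℕ → Multiset A, ∀ n, MRStep R (f n) (f (n + 1)))
    (hcp : ∀ l₁ r₁ l₂ r₂, (l₁, r₁) ∈ R → (l₂, r₂) ∈ R →
      ∀ O : Multiset A, O ≠ 0 → O ≤ l₁ → O ≤ l₂ →
      ∃ D, Relation.ReflTransGen (MRStep R) (r₁ + (l₂ - O)) D ∧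
        Relation.ReflTransGen (MRStep R) ((l₁ - O) + r₂) D) :
    ∀ M N₁ N₂, Relation.ReflTransGen (MRStep R) M N₁ →
      Relation.ReflTransGen (MRStep R) M N₂ →
      ∃ D, Relation.ReflTransGen (MRStep R) N₁ D ∧
        Relation.ReflTransGen (MRStep R) N₂ D := by
  -- well-foundedness of the reversed step relation
  have wf : WellFounded (fun a b : Multiset A => MRStep R b a) := by
    by_contra hwf
    apply hterm
    have hex : ∃ a, ¬ Acc (fun a b : Multiset A => MRStep R b a) a := by
      by_contra h
      push_neg at h
      exact hwf ⟨h⟩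
    obtain ⟨a, ha⟩ := hex
    choose! g hg1 hg2 using
      fun (x : Multiset A) (hx : ¬ Acc (fun a b : Multiset A => MRStep R b a) x) =>
        exists_not_acc_lt_of_not_acc hx
    have hacc : ∀ n, ¬ Acc (fun a b : Multiset A => MRStep R b a) (g^[n] a) := by
      intro n
      induction n with
      | zero => exact ha
      | succ n ih =>
        rw [Function.iterate_succ_apply']
        exact hg1 _ ih
    refine ⟨fun n => g^[n] a, fun n => ?_⟩
    simp only [Function.iterate_succ_apply']
    exact hg2 _ (hacc n)
  -- local confluence from the critical pair assumption
  have hlc : ∀ M N₁ N₂, MRStep R M N₁ → MRStep R M N₂ →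
      ∃ D, Relation.ReflTransGen (MRStep R) N₁ D ∧
        Relation.ReflTransGen (MRStep R) N₂ D := by
    rintro M N₁ N₂ ⟨⟨l₁, r₁⟩, h₁, K₁, hM₁, hN₁⟩ ⟨⟨l₂, r₂⟩, h₂, K₂, hM₂, hN₂⟩
    simp only at hM₁ hN₁ hM₂ hN₂
    have hMeq : l₁ + K₁ = l₂ + K₂ := hM₁ ▸ hM₂
    have hcount : ∀ a : A, Multiset.count a l₁ + Multiset.count a K₁ =
        Multiset.count a l₂ + Multiset.count a K₂ := by
      intro a
      have := congrArg (Multiset.count a) hMeq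
      simpa [Multiset.count_add] using this
    by_cases hO : l₁ - K₂ = 0
    · -- disjoint case
      have hle : l₁ ≤ K₂ := tsub_eq_zero_iff_le.mp hO
      set C := K₂ - l₁ with hC
      have hK₂ : K₂ = l₁ + C := by
        ext a
        have h1 := Multiset.le_iff_count.mp hle a
        simp only [hC, Multiset.count_add, Multiset.count_sub]
        omega
      have hK₁ : K₁ = l₂ + C := by
        ext a
        have h1 := hcount a
        have h2 := congrArg (Multiset.count a) hK₂
        simp only [Multiset.count_add] at h2 ⊢
        omega
      refine ⟨r₁ + r₂ + C, ?_, ?_⟩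
      · refine Relation.ReflTransGen.single ⟨(l₂, r₂), h₂, r₁ + C, ?_, ?_⟩
        · rw [hN₁, hK₁]; abel
        · simp only; abel
      · refine Relation.ReflTransGen.single ⟨(l₁, r₁), h₁, r₂ + C, ?_, ?_⟩
        · rw [hN₂, hK₂]; abel
        · simp only; abel
    · -- overlap case
      set O := l₁ - K₂ with hOdef
      have hOl₁ : O ≤ l₁ := tsub_le_self
      have hOl₂ : O ≤ l₂ := by
        rw [Multiset.le_iff_count]
        intro a
        have h1 := hcount a
        simp only [hOdef, Multiset.count_sub]
        omega
      set C := K₂ - (l₁ - O) with hCdef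
      have hK₂ : K₂ = (l₁ - O) + C := by
        ext a
        have h1 := hcount a
        simp only [hCdef, hOdef, Multiset.count_add, Multiset.count_sub]
        omega
      have hK₁ : K₁ = (l₂ - O) + C := by
        ext a
        have h1 := hcount a
        simp only [hCdef, hOdef, Multiset.count_add, Multiset.count_sub]
        omega
      obtain ⟨D, hD₁, hD₂⟩ := hcp l₁ r₁ l₂ r₂ h₁ h₂ O hO hOl₁ hOl₂
      refine ⟨D + C, ?_, ?_⟩
      · have := MRSteps.add_right hD₁ C
        rwa [hN₁, hK₁, ← add_assoc]
      · have := MRSteps.add_right hD₂ C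
        rwa [hN₂, hK₂, ← add_assoc, add_comm r₂ (l₁ - O)]
  -- Newman's lemma
  intro M
  induction M using wf.induction with
  | _ M ih =>
    intro N₁ N₂ h₁ h₂
    rcases h₁.cases_head with rfl | ⟨b, hb, hb'⟩
    · exact ⟨N₂, h₂, .refl⟩
    rcases h₂.cases_head with rfl | ⟨c, hc, hc'⟩
    · exact ⟨N₁, .refl, h₁⟩
    obtain ⟨d, hbd, hcd⟩ := hlc M b c hb hc
    obtain ⟨e, hN₁e, hde⟩ := ih b hb N₁ d hb' hbd
    obtain ⟨f, hef, hN₂f⟩ := ih c hc e N₂ (hcd.trans hde) hc'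
    exact ⟨f, hN₁e.trans hef, hN₂f⟩
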